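/- arXiv:2411.04767 — 3 statements merged into one kernel-verified Lean document; each statement's English description precedes it below -/
import Mathlib

section
/- Holevo–Helstrom theorem (achievability part): Let ρ₀, ρ₁ be density matrices on ℂ^d and λ ∈ [0,1]. Then there exist d×d complex matrices P₀, P₁ that are orthogonal projections (Hermitian idempotents) with P₀ + P₁ = I such that λ·Tr(P₀ρ₀) + (1−λ)·Tr(P₁ρ₁) = 1/2 + (1/2)·‖λρ₀ − (1−λ)ρ₁‖₁. -/
open Matrix BigOperators
open scoped ComplexOrder

open Classical in
noncomputable def msqrt {n : Type*} [Fintype n] [DecidableEq n] (A : Matrix n n ℂ) :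
    Matrix n n ℂ :=
  if h : A.PosSemidef then
    h.1.eigenvectorUnitary.1 * diagonal ((↑) ∘ (√·) ∘ h.1.eigenvalues) *
      (star h.1.eigenvectorUnitary : Matrix n n ℂ)
  else 0

noncomputable def traceNorm {n : Type*} [Fintype n] [DecidableEq n] (A : Matrix n n ℂ) : ℝ :=
  (msqrt (Aᴴ * A)).trace.re

noncomputable def fidelity {n : Type*} [Fintype n] [DecidableEq n] (ρ₀ ρ₁ : Matrix n n ℂ) : ℝ :=
  ((msqrt (msqrt ρ₀ * ρ₁ * msqrt ρ₀)).trace.re) ^ 2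

noncomputable def tensorPow {d : ℕ} (ρ : Matrix (Fin d) (Fin d) ℂ) (n : ℕ) :
    Matrix (Fin n → Fin d) (Fin n → Fin d) ℂ :=
  Matrix.of fun i j => ∏ k, ρ (i k) (j k)

/-- Holevo–Helstrom theorem (achievability part). -/
theorem holevo_helstrom_achievability {d : ℕ} (ρ₀ ρ₁ : Matrix (Fin d) (Fin d) ℂ)
    (hρ₀ : ρ₀.PosSemidef) (hρ₀t : ρ₀.trace = 1)
    (hρ₁ : ρ₁.PosSemidef) (hρ₁t : ρ₁.trace = 1)
    (l : ℝ) (hl0 : 0 ≤ l) (hl1 : l ≤ 1) :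
    ∃ P₀ P₁ : Matrix (Fin d) (Fin d) ℂ,
      P₀.IsHermitian ∧ P₁.IsHermitian ∧ P₀ * P₀ = P₀ ∧ P₁ * P₁ = P₁ ∧ P₀ + P₁ = 1 ∧
      l * ((P₀ * ρ₀).trace).re + (1 - l) * ((P₁ * ρ₁).trace).re =
        1 / 2 + (1 / 2) * traceNorm ((l : ℂ) • ρ₀ - ((1 - l : ℝ) : ℂ) • ρ₁) := by
  classical
  set Δ : Matrix (Fin d) (Fin d) ℂ := (l : ℂ) • ρ₀ - ((1 - l : ℝ) : ℂ) • ρ₁ with hΔdef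
  have hΔ : Δ.IsHermitian := by
    unfold Matrix.IsHermitian
    rw [hΔdef, conjTranspose_sub, conjTranspose_smul, conjTranspose_smul,
      hρ₀.1.eq, hρ₁.1.eq]
    simp [Complex.star_def, Complex.conj_ofReal]
  set U : Matrix (Fin d) (Fin d) ℂ := (hΔ.eigenvectorUnitary : Matrix (Fin d) (Fin d) ℂ)
    with hUdef
  set ev : Fin d → ℝ := hΔ.eigenvalues with hevdef
  have hU1 : U * Uᴴ = 1 := by
    rw [← Matrix.star_eq_conjTranspose]
    exact (Matrix.mem_unitaryGroup_iff).mp hΔ.eigenvectorUnitary.2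
  have hU2 : Uᴴ * U = 1 := by
    rw [← Matrix.star_eq_conjTranspose]
    exact (Matrix.mem_unitaryGroup_iff').mp hΔ.eigenvectorUnitary.2
  -- sandwich multiplication
  have sandwich_mul : ∀ g g' : Fin d → ℂ,
      (U * diagonal g * Uᴴ) * (U * diagonal g' * Uᴴ) = U * diagonal (fun i => g i * g' i) * Uᴴ := by
    intro g g'
    calc (U * diagonal g * Uᴴ) * (U * diagonal g' * Uᴴ)
        = U * diagonal g * (Uᴴ * U) * diagonal g' * Uᴴ := by
          simp only [Matrix.mul_assoc]
      _ = U * (diagonal g * diagonal g') * Uᴴ := by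
          rw [hU2, Matrix.mul_one]; simp only [Matrix.mul_assoc]
      _ = U * diagonal (fun i => g i * g' i) * Uᴴ := by
          rw [diagonal_mul_diagonal]
  have sandwich_trace : ∀ g : Fin d → ℂ, (U * diagonal g * Uᴴ).trace = ∑ i, g i := by
    intro g
    rw [Matrix.trace_mul_comm, ← Matrix.mul_assoc, hU2, Matrix.one_mul, Matrix.trace_diagonal]
  have sandwich_herm : ∀ g : Fin d → ℂ, (∀ i, star (g i) = g i) →
      (U * diagonal g * Uᴴ).IsHermitian := by
    intro g hg
    unfold Matrix.IsHermitian
    rw [conjTranspose_mul, conjTranspose_mul, conjTranspose_conjTranspose,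
      diagonal_conjTranspose, show star g = g from funext hg, Matrix.mul_assoc]
  have hspec : Δ = U * diagonal (fun i => (ev i : ℂ)) * Uᴴ := by
    have := hΔ.spectral_theorem
    rw [Unitary.conjStarAlgAut_apply] at this
    rw [← Matrix.star_eq_conjTranspose]
    exact this
  set f : Fin d → ℂ := fun i => if 0 ≤ ev i then 1 else 0 with hfdef
  refine ⟨U * diagonal f * Uᴴ, 1 - U * diagonal f * Uᴴ, ?_, ?_, ?_, ?_, ?_, ?_⟩
  · exact sandwich_herm f (fun i => by by_cases h : 0 ≤ ev i <;> simp [hfdef, h])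
  · exact (Matrix.isHermitian_one).sub
      (sandwich_herm f (fun i => by by_cases h : 0 ≤ ev i <;> simp [hfdef, h]))
  · rw [sandwich_mul, show (fun i => f i * f i) = f from
      funext fun i => by by_cases h : 0 ≤ ev i <;> simp [hfdef, h]]
  · have hidem : (U * diagonal f * Uᴴ) * (U * diagonal f * Uᴴ) = U * diagonal f * Uᴴ := by
      rw [sandwich_mul, show (fun i => f i * f i) = f from
        funext fun i => by by_cases h : 0 ≤ ev i <;> simp [hfdef, h]]
    rw [Matrix.sub_mul, Matrix.mul_sub, Matrix.mul_sub, hidem, Matrix.one_mul,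
      Matrix.mul_one, Matrix.one_mul]
    abel
  · abel
  · set P₀ : Matrix (Fin d) (Fin d) ℂ := U * diagonal f * Uᴴ with hP₀def
    -- trace of P₀ * Δ
    have hfev : ∀ i, f i * (ev i : ℂ) = ((if 0 ≤ ev i then ev i else 0 : ℝ) : ℂ) := by
      intro i; by_cases h : 0 ≤ ev i <;> simp [hfdef, h]
    have hTrP₀Δ : (P₀ * Δ).trace = ((∑ i, if 0 ≤ ev i then ev i else 0 : ℝ) : ℂ) := by
      rw [hP₀def, hspec, sandwich_mul, sandwich_trace, Complex.ofReal_sum]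
      exact Finset.sum_congr rfl fun i _ => hfev i
    -- trace norm of Δ
    have hpsd : (Δᴴ * Δ).PosSemidef := posSemidef_conjTranspose_mul_self Δ
    have hMpsd : (U * diagonal (fun i => ((|ev i| : ℝ) : ℂ)) * Uᴴ).PosSemidef := by
      exact Matrix.PosSemidef.mul_mul_conjTranspose_same
        (Matrix.posSemidef_diagonal_iff.mpr fun i =>
          Complex.zero_le_real.mpr (abs_nonneg _)) U
    have hM2 : (U * diagonal (fun i => ((|ev i| : ℝ) : ℂ)) * Uᴴ) ^ 2 = Δᴴ * Δ := by
      have habs : (fun i => ((|ev i| : ℝ) : ℂ) * ((|ev i| : ℝ) : ℂ))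
          = (fun i => ((ev i : ℝ) : ℂ) * ((ev i : ℝ) : ℂ)) :=
        funext fun i => by
          rw [← Complex.ofReal_mul, ← Complex.ofReal_mul, abs_mul_abs_self]
      rw [pow_two, sandwich_mul, hΔ.eq, hspec, sandwich_mul, habs]
    have hsqrt : msqrt (Δᴴ * Δ) = U * diagonal (fun i => ((|ev i| : ℝ) : ℂ)) * Uᴴ := by
      rw [msqrt, dif_pos hpsd]
      have h1 : hpsd.1.eigenvectorUnitary.1 * diagonal ((↑) ∘ (√·) ∘ hpsd.1.eigenvalues) *
          (star hpsd.1.eigenvectorUnitary : Matrix (Fin d) (Fin d) ℂ) = hpsd.1.cfc Real.sqrt := by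
        rw [IsHermitian.cfc, Unitary.conjStarAlgAut_apply]; rfl
      rw [h1]
      open MatrixOrder in
      rw [← hpsd.1.cfc_eq, ← cfcₙ_eq_cfc (hf0 := by simp), ← CFC.sqrt_eq_real_sqrt _ hpsd.nonneg]
      open MatrixOrder in
      exact CFC.sqrt_unique (by rw [← pow_two]; exact hM2) hMpsd.nonneg
    have hTN : traceNorm Δ = ∑ i, |ev i| := by
      rw [traceNorm, hsqrt, sandwich_trace]
      rw [show (∑ i, ((|ev i| : ℝ) : ℂ)) = ((∑ i, |ev i| : ℝ) : ℂ) by push_cast; ring]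
      exact Complex.ofReal_re _
    -- trace of Δ
    have hsum : ∑ i, ev i = 2 * l - 1 := by
      have h1 : Δ.trace = ((∑ i, ev i : ℝ) : ℂ) := by
        rw [hspec, sandwich_trace]; push_cast; ring
      have h2 : Δ.trace = ((2 * l - 1 : ℝ) : ℂ) := by
        rw [hΔdef, Matrix.trace_sub, Matrix.trace_smul, Matrix.trace_smul, hρ₀t, hρ₁t]
        simp [smul_eq_mul]; push_cast; ring
      exact_mod_cast h1.symm.trans h2
    -- pos part identity
    have hpos : (∑ i, if 0 ≤ ev i then ev i else 0) = ((∑ i, ev i) + ∑ i, |ev i|) / 2 := by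
      rw [← Finset.sum_add_distrib, Finset.sum_div]
      refine Finset.sum_congr rfl fun i _ => ?_
      by_cases h : 0 ≤ ev i
      · rw [if_pos h, abs_of_nonneg h]; ring
      · rw [if_neg h, abs_of_neg (not_le.mp h)]; ring
    -- linearity of trace
    have hlin : (P₀ * Δ).trace = (l : ℂ) * (P₀ * ρ₀).trace
        - ((1 - l : ℝ) : ℂ) * (P₀ * ρ₁).trace := by
      rw [hΔdef, Matrix.mul_sub, Matrix.mul_smul, Matrix.mul_smul, Matrix.trace_sub,
        Matrix.trace_smul, Matrix.trace_smul]
      simp [smul_eq_mul]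
    have hP₁tr : ((1 - P₀) * ρ₁).trace = 1 - (P₀ * ρ₁).trace := by
      rw [Matrix.sub_mul, Matrix.one_mul, Matrix.trace_sub, hρ₁t]
    have hre : l * ((P₀ * ρ₀).trace).re - (1 - l) * ((P₀ * ρ₁).trace).re
        = ∑ i, if 0 ≤ ev i then ev i else 0 := by
      have := congrArg Complex.re (hlin.symm.trans hTrP₀Δ)
      simpa [Complex.sub_re, Complex.re_ofReal_mul, Complex.ofReal_re] using this
    rw [hP₁tr, hTN]
    have : (1 - (P₀ * ρ₁).trace).re = 1 - ((P₀ * ρ₁).trace).re := by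
      simp [Complex.sub_re]
    rw [this]
    rw [hpos, hsum] at hre
    nlinarith [hre]
end

section
/- Multi-copy distinguishability, lower bound (corrected form of the paper's Lemma 2.1, left inequality): Let ρ₀, ρ₁ be density matrices on ℂ^d, set T = (1/2)·‖ρ₀ − ρ₁‖₁, and let n ≥ 1 be a natural number. Then 1 − (√(1 − T²))^n ≤ (1/2)·‖ρ₀^{⊗n} − ρ₁^{⊗n}‖₁. -/
open Matrix BigOperators
open scoped ComplexOrder

namespace Matrix.PosSemidef

variable {n : Type*} [Fintype n] [DecidableEq n] {A : Matrix n n ℂ}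

noncomputable def sqrt (h : A.PosSemidef) : Matrix n n ℂ :=
  h.1.eigenvectorUnitary.1 * diagonal ((↑) ∘ (√·) ∘ h.1.eigenvalues) *
    (star h.1.eigenvectorUnitary : Matrix n n ℂ)

open scoped MatrixOrder in
lemma sqrt_eq_cfcSqrt (h : A.PosSemidef) : h.sqrt = CFC.sqrt A := by
  rw [CFC.sqrt_eq_cfc, cfc_nnreal_eq_real _ A (Matrix.nonneg_iff_posSemidef.mpr h), h.1.cfc_eq]
  simp only [IsHermitian.cfc, sqrt, Unitary.conjStarAlgAut_apply]
  congr 2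
  ext i j
  by_cases hij : i = j
  · subst hij
    simp [diagonal_apply, max_eq_left (h.eigenvalues_nonneg i)]
  · simp [diagonal_apply, hij]

open scoped MatrixOrder in
lemma posSemidef_sqrt (h : A.PosSemidef) : h.sqrt.PosSemidef := by
  rw [sqrt_eq_cfcSqrt]; exact Matrix.nonneg_iff_posSemidef.mp (CFC.sqrt_nonneg A)

open scoped MatrixOrder in
lemma sqrt_mul_self (h : A.PosSemidef) : h.sqrt * h.sqrt = A := by
  rw [sqrt_eq_cfcSqrt]; exact CFC.sqrt_mul_sqrt_self A (Matrix.nonneg_iff_posSemidef.mpr h)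

open scoped MatrixOrder in
lemma eq_sqrt_of_sq_eq {B : Matrix n n ℂ} (hB : B.PosSemidef) (h : A.PosSemidef) (hsq : B ^ 2 = A) :
    B = h.sqrt := by
  rw [sqrt_eq_cfcSqrt]
  exact (CFC.sqrt_unique (by rw [← pow_two, hsq]) (Matrix.nonneg_iff_posSemidef.mpr hB)).symm

end Matrix.PosSemidef

namespace QHelp

noncomputable def sgn (x : ℝ) : ℝ := if x < 0 then -1 else if 0 < x then 1 else 0

lemma sgn_mul_self (x : ℝ) : sgn x * x = |x| := by
  unfold sgn
  rcases lt_trichotomy x 0 with h | h | h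
  · rw [if_pos h, abs_of_neg h]; ring
  · simp [h]
  · rw [if_neg (not_lt.mpr h.le), if_pos h, abs_of_pos h]; ring

lemma one_sub_sgn_nonneg (x : ℝ) : 0 ≤ 1 - sgn x := by unfold sgn; split_ifs <;> norm_num
lemma one_add_sgn_nonneg (x : ℝ) : 0 ≤ 1 + sgn x := by unfold sgn; split_ifs <;> norm_num
lemma one_sub_sgn_sq_nonneg (x : ℝ) : 0 ≤ 1 - sgn x * sgn x := by unfold sgn; split_ifs <;> norm_num

variable {m : Type*} [Fintype m] [DecidableEq m] {A : Matrix m m ℂ}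

lemma star_mul_self_eigU (hA : A.IsHermitian) :
    (star (hA.eigenvectorUnitary : Matrix m m ℂ)) * (hA.eigenvectorUnitary : Matrix m m ℂ) = 1 :=
  Unitary.star_mul_self_of_mem (SetLike.coe_mem _)

lemma mul_star_self_eigU (hA : A.IsHermitian) :
    (hA.eigenvectorUnitary : Matrix m m ℂ) * (star (hA.eigenvectorUnitary : Matrix m m ℂ)) = 1 :=
  Unitary.mul_star_self_of_mem (SetLike.coe_mem _)

lemma cfc_mul (hA : A.IsHermitian) (f g : ℝ → ℝ) :
    hA.cfc f * hA.cfc g = hA.cfc fun x => f x * g x := by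
  simp only [Matrix.IsHermitian.cfc, Unitary.conjStarAlgAut_apply, mul_assoc]
  rw [← mul_assoc (star _) ((hA.eigenvectorUnitary : Matrix m m ℂ)) _, star_mul_self_eigU hA,
    one_mul, ← mul_assoc (diagonal _) (diagonal _)]
  rw [diagonal_mul_diagonal]
  congr! 2 with i
  simp

lemma cfc_id (hA : A.IsHermitian) : hA.cfc (fun x => x) = A := by
  rw [Matrix.IsHermitian.cfc]
  have : (RCLike.ofReal ∘ (fun x : ℝ => x) ∘ hA.eigenvalues : m → ℂ)
      = RCLike.ofReal ∘ hA.eigenvalues := rfl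
  rw [this, ← hA.spectral_theorem]

lemma cfc_one (hA : A.IsHermitian) : hA.cfc (fun _ => 1) = 1 := by
  rw [Matrix.IsHermitian.cfc, Unitary.conjStarAlgAut_apply]
  have : (RCLike.ofReal ∘ (fun _ : ℝ => (1:ℝ)) ∘ hA.eigenvalues : m → ℂ) = fun _ => 1 := by
    funext i; simp
  rw [this, diagonal_one, mul_one, mul_star_self_eigU hA]

lemma cfc_sub (hA : A.IsHermitian) (f g : ℝ → ℝ) :
    hA.cfc (fun x => f x - g x) = hA.cfc f - hA.cfc g := by
  have : (RCLike.ofReal ∘ (fun x => f x - g x) ∘ hA.eigenvalues : m → ℂ)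
      = fun i => (RCLike.ofReal ∘ f ∘ hA.eigenvalues) i - (RCLike.ofReal ∘ g ∘ hA.eigenvalues) i := by
    funext i; simp
  simp only [Matrix.IsHermitian.cfc, Unitary.conjStarAlgAut_apply, this]
  rw [← diagonal_sub, mul_sub, sub_mul]

lemma cfc_isHermitian (hA : A.IsHermitian) (f : ℝ → ℝ) : (hA.cfc f).IsHermitian := by
  rw [Matrix.IsHermitian, Matrix.IsHermitian.cfc, Unitary.conjStarAlgAut_apply, ← star_eq_conjTranspose]
  simp only [StarMul.star_mul, star_star, star_eq_conjTranspose (diagonal _),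
    diagonal_conjTranspose, mul_assoc]
  congr!
  simp [Pi.star_def, Function.comp_def]

lemma cfc_posSemidef (hA : A.IsHermitian) {f : ℝ → ℝ} (hf : ∀ x, 0 ≤ f x) :
    (hA.cfc f).PosSemidef := by
  rw [Matrix.IsHermitian.cfc, Unitary.conjStarAlgAut_apply, show (star (hA.eigenvectorUnitary : Matrix m m ℂ))
      = (hA.eigenvectorUnitary : Matrix m m ℂ)ᴴ from rfl]
  exact (posSemidef_diagonal_iff.mpr fun i => by
    simpa using (RCLike.ofReal_nonneg (K := ℂ)).mpr (hf _)).mul_mul_conjTranspose_same _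

lemma trace_cfc (hA : A.IsHermitian) (f : ℝ → ℝ) :
    (hA.cfc f).trace = ((∑ i, f (hA.eigenvalues i) : ℝ) : ℂ) := by
  rw [Matrix.IsHermitian.cfc, Unitary.conjStarAlgAut_apply, trace_mul_cycle, star_mul_self_eigU hA, one_mul, trace_diagonal]
  push_cast
  rfl

-- chunk b
variable {B : Matrix m m ℂ}


lemma msqrt_of_posSemidef (h : A.PosSemidef) : msqrt A = h.sqrt := dif_pos h

lemma msqrt_eq_cfc (h : A.PosSemidef) : msqrt A = h.1.cfc Real.sqrt := by
  rw [msqrt_of_posSemidef h]; rfl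

lemma msqrt_posSemidef (h : A.PosSemidef) : (msqrt A).PosSemidef := by
  rw [msqrt_of_posSemidef h]; exact h.posSemidef_sqrt

lemma msqrt_mul_self (h : A.PosSemidef) : msqrt A * msqrt A = A := by
  rw [msqrt_of_posSemidef h]; exact h.sqrt_mul_self

-- trace of PSD matrix is a nonneg real
lemma posSemidef_trace_eq_re (h : A.PosSemidef) : A.trace = (A.trace.re : ℂ) ∧ 0 ≤ A.trace.re := by
  have h0 : (0 : ℂ) ≤ A.trace := by
    rw [Matrix.trace]
    refine Finset.sum_nonneg fun i _ => ?_
    simpa [dotProduct, Pi.single_apply, Matrix.mulVec] using h.dotProduct_mulVec_nonneg (Pi.single i 1)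
  obtain ⟨hre, him⟩ := Complex.le_def.mp h0
  constructor
  · exact (Complex.ext (by simp) (by simp [← him])).symm
  · simpa using hre

lemma trace_mul_psd (hA : A.PosSemidef) (hB : B.PosSemidef) :
    (A * B).trace = ((A * B).trace.re : ℂ) ∧ 0 ≤ (A * B).trace.re := by
  have h1 : A * B = hA.sqrt * (hA.sqrt * B) := by
    rw [← mul_assoc, hA.sqrt_mul_self]
  have h2 : (A * B).trace = (hA.sqrt * B * hA.sqrt).trace := by
    rw [h1, Matrix.trace_mul_comm]
  have hpsd : (hA.sqrt * B * hA.sqrt).PosSemidef := by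
    have := hB.mul_mul_conjTranspose_same hA.sqrt
    rwa [hA.posSemidef_sqrt.1.eq] at this
  rw [h2]
  exact posSemidef_trace_eq_re hpsd

lemma trace_mul_psd_re_nonneg (hA : A.PosSemidef) (hB : B.PosSemidef) :
    0 ≤ (A * B).trace.re := (trace_mul_psd hA hB).2

-- chunk c
lemma msqrt_conjTranspose_mul_self_of_herm (hA : A.IsHermitian) :
    msqrt (Aᴴ * A) = hA.cfc (fun x => |x|) := by
  have habs : (hA.cfc fun x => |x|).PosSemidef := cfc_posSemidef hA fun x => abs_nonneg x
  have hPSD : (Aᴴ * A).PosSemidef := Matrix.posSemidef_conjTranspose_mul_self A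
  have hsq : (hA.cfc fun x => |x|) ^ 2 = Aᴴ * A := by
    rw [pow_two, cfc_mul]
    have h1 : (fun x : ℝ => |x| * |x|) = fun x : ℝ => x * x := by
      funext x; exact abs_mul_abs_self x
    rw [h1, ← cfc_mul, cfc_id, hA.eq]
  rw [msqrt_of_posSemidef hPSD, ← habs.eq_sqrt_of_sq_eq hPSD hsq]

lemma traceNorm_herm (hA : A.IsHermitian) :
    traceNorm A = ∑ i, |hA.eigenvalues i| := by
  rw [traceNorm, msqrt_conjTranspose_mul_self_of_herm hA, trace_cfc]
  simp

lemma traceNorm_nonneg' (A : Matrix m m ℂ) : 0 ≤ traceNorm A := by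
  rw [traceNorm, msqrt]
  split_ifs with h
  · exact (posSemidef_trace_eq_re h.posSemidef_sqrt).2
  · simp

lemma sgn_mul_eq_abs (hA : A.IsHermitian) :
    hA.cfc sgn * A = hA.cfc (fun x => |x|) := by
  have h : hA.cfc sgn * hA.cfc (fun x => x) = hA.cfc (fun x => |x|) := by
    rw [cfc_mul, show (fun x : ℝ => sgn x * x) = fun x : ℝ => |x| from funext sgn_mul_self]
  rwa [cfc_id] at h

lemma traceNorm_eq_sgn_trace (hA : A.IsHermitian) :
    traceNorm A = ((hA.cfc sgn * A).trace).re := by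
  rw [sgn_mul_eq_abs hA, trace_cfc, traceNorm_herm hA]; simp

lemma dot_eq_entry (W U : Matrix m m ℂ) (i : m) :
    dotProduct (star (fun a => U a i)) (W *ᵥ (fun a => U a i))
      = (star U * W * U) i i := by
  simp only [Matrix.mul_apply, dotProduct, Matrix.mulVec, Matrix.star_apply,
    Pi.star_apply, Finset.sum_mul, Finset.mul_sum]
  rw [Finset.sum_comm]
  exact Finset.sum_congr rfl fun a _ => Finset.sum_congr rfl fun b _ => by ring

lemma dot_self_eq_one (hA : A.IsHermitian) (i : m) :
    dotProduct (star (fun a => (hA.eigenvectorUnitary : Matrix m m ℂ) a i))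
      (fun a => (hA.eigenvectorUnitary : Matrix m m ℂ) a i) = 1 := by
  have h := star_mul_self_eigU hA
  have h1 : (star (hA.eigenvectorUnitary : Matrix m m ℂ)
      * (hA.eigenvectorUnitary : Matrix m m ℂ)) i i = 1 := by rw [h]; simp
  rw [← h1]
  simp only [Matrix.mul_apply, dotProduct, Matrix.star_apply, Pi.star_apply]

lemma trace_mul_re_le_traceNorm {W : Matrix m m ℂ} (hA : A.IsHermitian)
    (h1 : (1 - W).PosSemidef) (h2 : (1 + W).PosSemidef) :
    ((W * A).trace).re ≤ traceNorm A := by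
  set U : Matrix m m ℂ := (hA.eigenvectorUnitary : Matrix m m ℂ) with hU
  set d : m → ℝ := hA.eigenvalues with hd
  set X : Matrix m m ℂ := star U * W * U with hX
  have htr : (W * A).trace = (X * diagonal (RCLike.ofReal ∘ d)).trace := by
    conv_lhs => rw [hA.spectral_theorem, Unitary.conjStarAlgAut_apply]
    rw [show W * (U * diagonal (RCLike.ofReal ∘ d) * star U)
        = (W * U) * diagonal (RCLike.ofReal ∘ d) * star U by simp only [mul_assoc]]
    rw [Matrix.trace_mul_cycle, hX, ← mul_assoc]
  have hXd : ∀ i, (X i i).re ≤ 1 ∧ -1 ≤ (X i i).re := by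
    intro i
    set v : m → ℂ := fun a => U a i with hv
    have hvW : dotProduct (star v) (W *ᵥ v) = X i i := dot_eq_entry W U i
    have hv1 : dotProduct (star v) v = 1 := dot_self_eq_one hA i
    constructor
    · have := h1.dotProduct_mulVec_nonneg v
      rw [Matrix.sub_mulVec, Matrix.one_mulVec, dotProduct_sub, hvW, hv1] at this
      have := (Complex.le_def.mp this).1
      simp at this; linarith
    · have := h2.dotProduct_mulVec_nonneg v
      rw [Matrix.add_mulVec, Matrix.one_mulVec, dotProduct_add, hvW, hv1] at this
      have := (Complex.le_def.mp this).1
      simp at this; linarith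
  rw [htr, traceNorm_herm hA, ← hd]
  have hdiag : (X * diagonal (RCLike.ofReal ∘ d)).trace = ∑ i, X i i * ((d i : ℝ) : ℂ) := by
    simp [Matrix.trace, Matrix.diag, Matrix.mul_diagonal, Function.comp]
  rw [hdiag, Complex.re_sum]
  refine Finset.sum_le_sum fun i _ => ?_
  have hre : (X i i * ((d i : ℝ) : ℂ)).re = (X i i).re * d i := by
    simp [Complex.mul_re]
  rw [hre]
  calc (X i i).re * d i ≤ |(X i i).re * d i| := le_abs_self _
    _ = |(X i i).re| * |d i| := abs_mul _ _
    _ ≤ 1 * |d i| := by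
        refine mul_le_mul_of_nonneg_right ?_ (abs_nonneg _)
        rw [abs_le]; exact ⟨(hXd i).2, (hXd i).1⟩
    _ = |d i| := one_mul _

lemma frob_entry (Z : Matrix m m ℂ) :
    ((Zᴴ * Z).trace).re = ∑ p : m × m, ‖Z p.1 p.2‖ ^ 2 := by
  rw [Matrix.trace, Complex.re_sum]
  have h : ∀ i, ((Zᴴ * Z).diag i).re = ∑ j, ‖Z j i‖ ^ 2 := by
    intro i
    rw [Matrix.diag_apply, Matrix.mul_apply, Complex.re_sum]
    refine Finset.sum_congr rfl fun j _ => ?_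
    rw [Matrix.conjTranspose_apply,
      show star (Z j i) * Z j i = Z j i * star (Z j i) from mul_comm _ _,
      Complex.star_def, Complex.mul_conj]
    simp [Complex.sq_norm]
  simp_rw [h]
  rw [Fintype.sum_prod_type, Finset.sum_comm]

lemma abs_trace_mul_le (X Y : Matrix m m ℂ) :
    |((X * Y).trace).re| ≤ Real.sqrt ((Xᴴ * X).trace).re * Real.sqrt ((Yᴴ * Y).trace).re := by
  have h1 : |((X * Y).trace).re|
      ≤ ∑ p : m × m, ‖X p.1 p.2‖ * ‖Y p.2 p.1‖ := by
    calc |((X * Y).trace).re| ≤ ‖(X * Y).trace‖ := Complex.abs_re_le_norm _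
      _ ≤ ∑ i, ‖(X * Y).diag i‖ := by
          rw [Matrix.trace]; exact norm_sum_le _ _
      _ ≤ ∑ i, ∑ j, ‖X i j‖ * ‖Y j i‖ := by
          refine Finset.sum_le_sum fun i _ => ?_
          rw [Matrix.diag_apply, Matrix.mul_apply]
          calc ‖∑ j, X i j * Y j i‖ ≤ ∑ j, ‖X i j * Y j i‖ :=
              norm_sum_le _ _
            _ = ∑ j, ‖X i j‖ * ‖Y j i‖ := by
                simp [_root_.map_mul]
      _ = ∑ p : m × m, ‖X p.1 p.2‖ * ‖Y p.2 p.1‖ := by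
          rw [Fintype.sum_prod_type]
  have h2 := Finset.sum_mul_sq_le_sq_mul_sq Finset.univ
      (fun p : m × m => ‖X p.1 p.2‖) (fun p : m × m => ‖Y p.2 p.1‖)
  rw [frob_entry X, frob_entry Y]
  have hYswap : (∑ p : m × m, ‖Y p.1 p.2‖ ^ 2)
      = ∑ p : m × m, ‖Y p.2 p.1‖ ^ 2 :=
    Fintype.sum_equiv (Equiv.prodComm m m) _ _ (fun p => rfl)
  rw [hYswap]
  refine h1.trans ?_
  have hnn : 0 ≤ ∑ p : m × m, ‖X p.1 p.2‖ * ‖Y p.2 p.1‖ :=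
    Finset.sum_nonneg fun p _ => mul_nonneg (norm_nonneg _) (norm_nonneg _)
  calc (∑ p : m × m, ‖X p.1 p.2‖ * ‖Y p.2 p.1‖)
      = Real.sqrt ((∑ p : m × m, ‖X p.1 p.2‖ * ‖Y p.2 p.1‖) ^ 2) :=
        (Real.sqrt_sq hnn).symm
    _ ≤ Real.sqrt ((∑ p : m × m, ‖X p.1 p.2‖ ^ 2)
          * ∑ p : m × m, ‖Y p.2 p.1‖ ^ 2) := Real.sqrt_le_sqrt h2
    _ = Real.sqrt (∑ p : m × m, ‖X p.1 p.2‖ ^ 2)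
          * Real.sqrt (∑ p : m × m, ‖Y p.2 p.1‖ ^ 2) :=
        Real.sqrt_mul (Finset.sum_nonneg fun p _ => sq_nonneg _) _

-- chunk d
lemma cfc_add (hA : A.IsHermitian) (f g : ℝ → ℝ) :
    hA.cfc (fun x => f x + g x) = hA.cfc f + hA.cfc g := by
  have : (RCLike.ofReal ∘ (fun x => f x + g x) ∘ hA.eigenvalues : m → ℂ)
      = fun i => (RCLike.ofReal ∘ f ∘ hA.eigenvalues) i
          + (RCLike.ofReal ∘ g ∘ hA.eigenvalues) i := by
    funext i; simp
  simp only [Matrix.IsHermitian.cfc, Unitary.conjStarAlgAut_apply, this]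
  rw [← diagonal_add, mul_add, add_mul]

lemma delta_S (R Sg : Matrix m m ℂ) :
    (R - Sg) * (R + Sg) + (R + Sg) * (R - Sg) = (R*R - Sg*Sg) + (R*R - Sg*Sg) := by
  noncomm_ring

lemma powers_stormer {ρ σ : Matrix m m ℂ} (hρ : ρ.PosSemidef) (hσ : σ.PosSemidef)
    (hρt : ρ.trace = 1) (hσt : σ.trace = 1) :
    2 - 2 * ((msqrt ρ * msqrt σ).trace).re ≤ traceNorm (ρ - σ) := by
  set R := msqrt ρ with hRdef
  set Sg := msqrt σ with hSgdef
  have hRpsd : R.PosSemidef := msqrt_posSemidef hρ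
  have hSpsd : Sg.PosSemidef := msqrt_posSemidef hσ
  have hRR : R * R = ρ := msqrt_mul_self hρ
  have hSS : Sg * Sg = σ := msqrt_mul_self hσ
  have hΔ : (R - Sg).IsHermitian := hRpsd.1.sub hSpsd.1
  set Δ := R - Sg with hΔdef
  set S := R + Sg with hSdef
  set U : Matrix m m ℂ := hΔ.cfc sgn with hUdef
  have hU1 : ((1 : Matrix m m ℂ) - U).PosSemidef := by
    have h : (1 : Matrix m m ℂ) - U = hΔ.cfc (fun x => 1 - sgn x) := by
      rw [cfc_sub hΔ, cfc_one hΔ]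
    rw [h]; exact cfc_posSemidef hΔ fun x => one_sub_sgn_nonneg x
  have hU2 : ((1 : Matrix m m ℂ) + U).PosSemidef := by
    have h : (1 : Matrix m m ℂ) + U = hΔ.cfc (fun x => 1 + sgn x) := by
      rw [cfc_add hΔ, cfc_one hΔ]
    rw [h]; exact cfc_posSemidef hΔ fun x => one_add_sgn_nonneg x
  have halg : Δ * S + S * Δ = (ρ - σ) + (ρ - σ) := by
    rw [hΔdef, hSdef]
    rw [delta_S R Sg, hRR, hSS]
  set Aabs := hΔ.cfc (fun x => |x|) with hAabs
  have habs : U * Δ = Aabs := sgn_mul_eq_abs hΔ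
  have hΔU : Δ * U = Aabs := by
    have h : hΔ.cfc (fun x => x) * hΔ.cfc sgn = hΔ.cfc (fun x => |x|) := by
      rw [cfc_mul, show (fun x : ℝ => x * sgn x) = fun x : ℝ => |x| from
        funext fun x => by rw [mul_comm]; exact sgn_mul_self x]
    rwa [cfc_id] at h
  have hUtr : ((U * (ρ - σ)).trace).re ≤ traceNorm (ρ - σ) :=
    trace_mul_re_le_traceNorm (hρ.1.sub hσ.1) hU1 hU2
  -- trace identity
  have htr2 : (U * (ρ - σ)).trace + (U * (ρ - σ)).trace = (Aabs * S).trace + (Aabs * S).trace := by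
    have e0 : (U * (ρ - σ)).trace + (U * (ρ - σ)).trace = (U * (Δ * S)).trace + (U * (S * Δ)).trace := by
      rw [← trace_add, ← trace_add, ← mul_add, ← mul_add, halg]
    rw [e0]
    congr 1
    · rw [← mul_assoc, habs]
    · rw [← mul_assoc, Matrix.trace_mul_comm (U * S) Δ, ← mul_assoc, hΔU]
  -- pos and neg parts
  set P := hΔ.cfc (fun x => max x 0) with hP
  set N := hΔ.cfc (fun x => max (-x) 0) with hN
  have hPpsd : P.PosSemidef := cfc_posSemidef hΔ fun x => le_max_right x 0
  have hNpsd : N.PosSemidef := cfc_posSemidef hΔ fun x => le_max_right (-x) 0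
  have hPN_sub : P - N = Δ := by
    rw [hP, hN, ← cfc_sub hΔ,
      show (fun x : ℝ => max x 0 - max (-x) 0) = fun x : ℝ => x from funext fun x => by
        rcases le_total x 0 with h | h
        · rw [max_eq_right h, max_eq_left (by linarith : (0:ℝ) ≤ -x)]; ring
        · rw [max_eq_left h, max_eq_right (by linarith : -x ≤ (0:ℝ))]; ring,
      cfc_id hΔ]
  have hPN_add : P + N = Aabs := by
    rw [hP, hN, ← cfc_add hΔ, hAabs,
      show (fun x : ℝ => max x 0 + max (-x) 0) = fun x : ℝ => |x| from funext fun x => by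
        rcases le_total x 0 with h | h
        · rw [max_eq_right h, max_eq_left (by linarith : (0:ℝ) ≤ -x), abs_of_nonpos h]; ring
        · rw [max_eq_left h, max_eq_right (by linarith : -x ≤ (0:ℝ)), abs_of_nonneg h]; ring]
  have hSmΔ : (S - Δ).PosSemidef := by
    have h : S - Δ = Sg + Sg := by rw [hSdef, hΔdef]; abel
    rw [h]; exact hSpsd.add hSpsd
  have hSpΔ : (S + Δ).PosSemidef := by
    have h : S + Δ = R + R := by rw [hSdef, hΔdef]; abel
    rw [h]; exact hRpsd.add hRpsd
  have t1 : 0 ≤ ((P * (S - Δ)).trace).re := trace_mul_psd_re_nonneg hPpsd hSmΔ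
  have t2 : 0 ≤ ((N * (S + Δ)).trace).re := trace_mul_psd_re_nonneg hNpsd hSpΔ
  have expand : (P * (S - Δ)).trace + (N * (S + Δ)).trace = (Aabs * S).trace - (Δ * Δ).trace := by
    have h : P * (S - Δ) + N * (S + Δ) = (P + N) * S - (P - N) * Δ := by noncomm_ring
    rw [← trace_add, h, hPN_add, hPN_sub, trace_sub]
  have hΔΔ : (Δ * Δ).trace = ρ.trace + σ.trace - ((R * Sg).trace + (R * Sg).trace) := by
    have h : Δ * Δ = (R*R + Sg*Sg) - (R*Sg + Sg*R) := by rw [hΔdef]; noncomm_ring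
    rw [h, trace_sub, trace_add, trace_add, hRR, hSS, Matrix.trace_mul_comm Sg R]
  have re2 : ((Δ * Δ).trace).re = 2 - 2 * ((R * Sg).trace).re := by
    rw [hΔΔ, hρt, hσt]
    simp [Complex.sub_re, Complex.add_re]; ring
  have re1 : ((P * (S - Δ)).trace).re + ((N * (S + Δ)).trace).re
      = ((Aabs * S).trace).re - ((Δ * Δ).trace).re := by
    rw [← Complex.add_re, expand, Complex.sub_re]
  have re3 : ((U * (ρ - σ)).trace).re + ((U * (ρ - σ)).trace).re
      = ((Aabs * S).trace).re + ((Aabs * S).trace).re := by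
    rw [← Complex.add_re, htr2, Complex.add_re]
  linarith

lemma cs_bound {ρ σ : Matrix m m ℂ} (hρ : ρ.PosSemidef) (hσ : σ.PosSemidef)
    (hρt : ρ.trace = 1) (hσt : σ.trace = 1) :
    traceNorm (ρ - σ) ≤ Real.sqrt (2 - 2 * ((msqrt ρ * msqrt σ).trace).re)
      * Real.sqrt (2 + 2 * ((msqrt ρ * msqrt σ).trace).re) := by
  set R := msqrt ρ with hRdef
  set Sg := msqrt σ with hSgdef
  have hRpsd : R.PosSemidef := msqrt_posSemidef hρ
  have hSpsd : Sg.PosSemidef := msqrt_posSemidef hσ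
  have hRR : R * R = ρ := msqrt_mul_self hρ
  have hSS : Sg * Sg = σ := msqrt_mul_self hσ
  set Δ := R - Sg with hΔdef
  set S := R + Sg with hSdef
  have hΔherm : Δ.IsHermitian := hRpsd.1.sub hSpsd.1
  have hSherm : S.IsHermitian := hRpsd.1.add hSpsd.1
  have hM : (ρ - σ).IsHermitian := hρ.1.sub hσ.1
  set M := ρ - σ with hMdef
  set U : Matrix m m ℂ := hM.cfc sgn with hUdef
  have hUherm : U.IsHermitian := cfc_isHermitian hM sgn
  set H := ((R * Sg).trace).re with hH
  have halg : Δ * S + S * Δ = M + M := by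
    rw [hΔdef, hSdef, delta_S R Sg, hRR, hSS]
  -- trace norm as trace against sign matrix
  have htn : traceNorm M = ((U * M).trace).re := traceNorm_eq_sgn_trace hM
  -- trace splitting
  have hsplit : (U * M).trace + (U * M).trace = ((S * U) * Δ).trace + ((U * S) * Δ).trace := by
    have e0 : (U * M).trace + (U * M).trace = (U * (Δ * S)).trace + (U * (S * Δ)).trace := by
      rw [← trace_add, ← trace_add, ← mul_add, ← mul_add, halg]
    rw [e0]
    rw [Matrix.trace_mul_comm U (Δ * S), mul_assoc Δ S U, Matrix.trace_mul_comm Δ (S * U),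
      ← mul_assoc U S Δ]
  -- Frobenius norms
  have hΔΔtr : ((Δᴴ * Δ).trace).re = 2 - 2 * H := by
    have h : Δ * Δ = (R*R + Sg*Sg) - (R*Sg + Sg*R) := by rw [hΔdef]; noncomm_ring
    rw [hΔherm.eq, h, trace_sub, trace_add, trace_add, hRR, hSS,
      Matrix.trace_mul_comm Sg R, hρt, hσt]
    simp [Complex.sub_re, Complex.add_re, hH]; ring
  have hSStr : ((S * S).trace).re = 2 + 2 * H := by
    have h : S * S = (R*R + Sg*Sg) + (R*Sg + Sg*R) := by rw [hSdef]; noncomm_ring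
    rw [h, trace_add, trace_add, trace_add, hRR, hSS, Matrix.trace_mul_comm Sg R, hρt, hσt]
    simp [Complex.add_re, hH]; ring
  have hSSpsd : (S * S).PosSemidef := by
    have h := Matrix.posSemidef_conjTranspose_mul_self S
    rwa [hSherm.eq] at h
  have h1UU : ((1 : Matrix m m ℂ) - U * U).PosSemidef := by
    have h : (1 : Matrix m m ℂ) - U * U = hM.cfc (fun x => 1 - sgn x * sgn x) := by
      rw [cfc_sub hM, cfc_one hM, cfc_mul hM]
    rw [h]; exact cfc_posSemidef hM fun x => one_sub_sgn_sq_nonneg x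
  have hKle : (((U * U) * (S * S)).trace).re ≤ ((S * S).trace).re := by
    have hid : (((1 : Matrix m m ℂ) - U * U) * (S * S)).trace
        = (S * S).trace - ((U * U) * (S * S)).trace := by
      rw [sub_mul, one_mul, trace_sub]
    have hnn := trace_mul_psd_re_nonneg h1UU hSSpsd
    rw [hid] at hnn
    rw [Complex.sub_re] at hnn
    linarith
  have hKle' : (((U * U) * (S * S)).trace).re ≤ 2 + 2 * H := by rw [← hSStr]; exact hKle
  -- the two CS bounds
  have e1 : (((S * U)ᴴ * (S * U)).trace) = (((U * U) * (S * S)).trace) := by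
    rw [conjTranspose_mul, hUherm.eq, hSherm.eq]
    have h : (U * S) * (S * U) = U * (S * S) * U := by noncomm_ring
    rw [h, Matrix.trace_mul_cycle]
  have e2 : (((U * S)ᴴ * (U * S)).trace) = (((U * U) * (S * S)).trace) := by
    rw [conjTranspose_mul, hUherm.eq, hSherm.eq]
    have h : (S * U) * (U * S) = S * (U * U) * S := by noncomm_ring
    rw [h, Matrix.trace_mul_cycle, Matrix.trace_mul_comm]
  have b1 : |(((S * U) * Δ).trace).re| ≤ Real.sqrt ((((U * U) * (S * S)).trace).re)
      * Real.sqrt (2 - 2 * H) := by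
    have h := abs_trace_mul_le (S * U) Δ
    rwa [e1, hΔΔtr] at h
  have b2 : |(((U * S) * Δ).trace).re| ≤ Real.sqrt ((((U * U) * (S * S)).trace).re)
      * Real.sqrt (2 - 2 * H) := by
    have h := abs_trace_mul_le (U * S) Δ
    rwa [e2, hΔΔtr] at h
  have hsq : Real.sqrt ((((U * U) * (S * S)).trace).re) ≤ Real.sqrt (2 + 2 * H) :=
    Real.sqrt_le_sqrt hKle'
  have hre : ((U * M).trace).re + ((U * M).trace).re
      = (((S * U) * Δ).trace).re + (((U * S) * Δ).trace).re := by
    rw [← Complex.add_re, hsplit, Complex.add_re]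
  have hfin : traceNorm M + traceNorm M
      ≤ Real.sqrt (2 - 2 * H) * Real.sqrt (2 + 2 * H)
        + Real.sqrt (2 - 2 * H) * Real.sqrt (2 + 2 * H) := by
    have l1 : (((S * U) * Δ).trace).re ≤ Real.sqrt (2 + 2 * H) * Real.sqrt (2 - 2 * H) := by
      calc (((S * U) * Δ).trace).re ≤ |(((S * U) * Δ).trace).re| := le_abs_self _
        _ ≤ Real.sqrt ((((U * U) * (S * S)).trace).re) * Real.sqrt (2 - 2 * H) := b1
        _ ≤ Real.sqrt (2 + 2 * H) * Real.sqrt (2 - 2 * H) :=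
            mul_le_mul_of_nonneg_right hsq (Real.sqrt_nonneg _)
    have l2 : (((U * S) * Δ).trace).re ≤ Real.sqrt (2 + 2 * H) * Real.sqrt (2 - 2 * H) := by
      calc (((U * S) * Δ).trace).re ≤ |(((U * S) * Δ).trace).re| := le_abs_self _
        _ ≤ Real.sqrt ((((U * U) * (S * S)).trace).re) * Real.sqrt (2 - 2 * H) := b2
        _ ≤ Real.sqrt (2 + 2 * H) * Real.sqrt (2 - 2 * H) :=
            mul_le_mul_of_nonneg_right hsq (Real.sqrt_nonneg _)
    rw [htn]
    linarith [l1, l2, hre]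
  linarith [hfin]

-- chunk e
lemma msqrt_trace_le_one {ρ σ : Matrix m m ℂ} (hρ : ρ.PosSemidef) (hσ : σ.PosSemidef)
    (hρt : ρ.trace = 1) (hσt : σ.trace = 1) :
    ((msqrt ρ * msqrt σ).trace).re ≤ 1 := by
  set R := msqrt ρ with hRdef
  set Sg := msqrt σ with hSgdef
  have hRpsd := msqrt_posSemidef hρ
  have hSpsd := msqrt_posSemidef hσ
  have hRR := msqrt_mul_self hρ
  have hSS := msqrt_mul_self hσ
  have hΔherm : (R - Sg).IsHermitian := hRpsd.1.sub hSpsd.1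
  have hpsd := Matrix.posSemidef_conjTranspose_mul_self (R - Sg)
  have h0 := (posSemidef_trace_eq_re hpsd).2
  have h : ((R - Sg)ᴴ * (R - Sg)).trace = ρ.trace + σ.trace - ((R*Sg).trace + (R*Sg).trace) := by
    rw [hΔherm.eq]
    have hx : (R - Sg) * (R - Sg) = (R*R + Sg*Sg) - (R*Sg + Sg*R) := by noncomm_ring
    rw [hx, trace_sub, trace_add, trace_add, hRR, hSS, Matrix.trace_mul_comm Sg R]
  rw [h, hρt, hσt] at h0
  simp [Complex.sub_re, Complex.add_re] at h0
  linarith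

variable {d : ℕ}

lemma tensorPow_mul (A B : Matrix (Fin d) (Fin d) ℂ) (n : ℕ) :
    tensorPow A n * tensorPow B n = tensorPow (A * B) n := by
  ext i j
  rw [Matrix.mul_apply]
  have h1 : ∀ k : Fin n → Fin d, tensorPow A n i k * tensorPow B n k j
      = ∏ l, A (i l) (k l) * B (k l) (j l) := by
    intro k
    rw [tensorPow, tensorPow, Matrix.of_apply, Matrix.of_apply, ← Finset.prod_mul_distrib]
  simp_rw [h1]
  rw [show (tensorPow (A*B) n) i j = ∏ l, ∑ t, A (i l) t * B t (j l) by
    simp [tensorPow, Matrix.mul_apply]]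
  rw [Fintype.prod_sum]

lemma tensorPow_conjTranspose (A : Matrix (Fin d) (Fin d) ℂ) (n : ℕ) :
    (tensorPow A n)ᴴ = tensorPow Aᴴ n := by
  ext i j
  simp [tensorPow, Matrix.conjTranspose_apply, star_prod]

lemma tensorPow_trace (A : Matrix (Fin d) (Fin d) ℂ) (n : ℕ) :
    (tensorPow A n).trace = A.trace ^ n := by
  rw [Matrix.trace, Matrix.trace, Fintype.sum_pow]
  exact Finset.sum_congr rfl fun p _ => by simp [tensorPow, Matrix.diag]

lemma tensorPow_posSemidef {A : Matrix (Fin d) (Fin d) ℂ} (h : A.PosSemidef) (n : ℕ) :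
    (tensorPow A n).PosSemidef := by
  obtain ⟨B, hB⟩ : ∃ B : Matrix (Fin d) (Fin d) ℂ, A = Bᴴ * B :=
    ⟨h.sqrt, by rw [h.posSemidef_sqrt.1.eq, h.sqrt_mul_self]⟩
  rw [hB, ← tensorPow_mul, ← tensorPow_conjTranspose]
  exact Matrix.posSemidef_conjTranspose_mul_self _

lemma tensorPow_msqrt {A : Matrix (Fin d) (Fin d) ℂ} (h : A.PosSemidef) (n : ℕ) :
    msqrt (tensorPow A n) = tensorPow (msqrt A) n := by
  have htp : (tensorPow A n).PosSemidef := tensorPow_posSemidef h n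
  have hX : (tensorPow (msqrt A) n).PosSemidef := tensorPow_posSemidef (msqrt_posSemidef h) n
  have hsq : (tensorPow (msqrt A) n) ^ 2 = tensorPow A n := by
    rw [pow_two, tensorPow_mul, msqrt_mul_self h]
  rw [msqrt_of_posSemidef htp, ← hX.eq_sqrt_of_sq_eq htp hsq]

end QHelp

/-- Multi-copy distinguishability, lower bound. -/
theorem multi_copy_distinguishability_lower {d : ℕ} (ρ₀ ρ₁ : Matrix (Fin d) (Fin d) ℂ)
    (hρ₀ : ρ₀.PosSemidef) (hρ₀t : ρ₀.trace = 1)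
    (hρ₁ : ρ₁.PosSemidef) (hρ₁t : ρ₁.trace = 1)
    (n : ℕ) (hn : 1 ≤ n) :
    1 - (Real.sqrt (1 - ((1 / 2) * traceNorm (ρ₀ - ρ₁)) ^ 2)) ^ n ≤
      (1 / 2) * traceNorm (tensorPow ρ₀ n - tensorPow ρ₁ n)  := by
  classical
  set T := (1/2 : ℝ) * traceNorm (ρ₀ - ρ₁) with hT
  set H := ((msqrt ρ₀ * msqrt ρ₁).trace).re with hH
  have hHnn : 0 ≤ H :=
    QHelp.trace_mul_psd_re_nonneg (QHelp.msqrt_posSemidef hρ₀) (QHelp.msqrt_posSemidef hρ₁)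
  have hH1 : H ≤ 1 := QHelp.msqrt_trace_le_one hρ₀ hρ₁ hρ₀t hρ₁t
  have hTnn : 0 ≤ T := by
    have := QHelp.traceNorm_nonneg' (ρ₀ - ρ₁)
    rw [hT]; linarith
  have hcs := QHelp.cs_bound hρ₀ hρ₁ hρ₀t hρ₁t
  have h22 : (0:ℝ) ≤ 2 - 2*H := by linarith
  have hprod : Real.sqrt (2 - 2*H) * Real.sqrt (2 + 2*H) = 2 * Real.sqrt (1 - H^2) := by
    rw [← Real.sqrt_mul h22, show (2-2*H)*(2+2*H) = 2^2 * (1 - H^2) by ring,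
      Real.sqrt_mul (by positivity : (0:ℝ) ≤ 2^2), Real.sqrt_sq (by norm_num : (0:ℝ) ≤ 2)]
  have hT2 : T^2 ≤ 1 - H^2 := by
    have h1 : 2*T ≤ 2 * Real.sqrt (1 - H^2) := by
      rw [← hprod, hT]; linarith [hcs]
    have h3 : T ≤ Real.sqrt (1 - H^2) := by linarith
    calc T^2 ≤ Real.sqrt (1 - H^2)^2 := pow_le_pow_left₀ hTnn h3 2
      _ = 1 - H^2 := Real.sq_sqrt (by nlinarith)
  have hHle : H ≤ Real.sqrt (1 - T^2) := by
    rw [show H = Real.sqrt (H^2) from (Real.sqrt_sq hHnn).symm]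
    exact Real.sqrt_le_sqrt (by linarith)
  have hHn : H ^ n ≤ (Real.sqrt (1 - T^2)) ^ n := pow_le_pow_left₀ hHnn hHle n
  have hPt : (tensorPow ρ₀ n).trace = 1 := by rw [QHelp.tensorPow_trace, hρ₀t, one_pow]
  have hQt : (tensorPow ρ₁ n).trace = 1 := by rw [QHelp.tensorPow_trace, hρ₁t, one_pow]
  have hps := QHelp.powers_stormer (QHelp.tensorPow_posSemidef hρ₀ n)
    (QHelp.tensorPow_posSemidef hρ₁ n) hPt hQt
  have hHn_eq : ((msqrt (tensorPow ρ₀ n) * msqrt (tensorPow ρ₁ n)).trace).re = H ^ n := by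
    rw [QHelp.tensorPow_msqrt hρ₀, QHelp.tensorPow_msqrt hρ₁, QHelp.tensorPow_mul,
      QHelp.tensorPow_trace]
    have hreal := (QHelp.trace_mul_psd (QHelp.msqrt_posSemidef hρ₀)
      (QHelp.msqrt_posSemidef hρ₁)).1
    rw [hreal, ← hH, ← Complex.ofReal_pow, Complex.ofReal_re]
  rw [hHn_eq] at hps
  linarith [hHn, hps]
end

section
/- Multi-copy distinguishability, upper bound (unconditional form): Let ρ₀, ρ₁ be density matrices on ℂ^d, set T = (1/2)·‖ρ₀ − ρ₁‖₁, and let n ≥ 1 be a natural number. Then (1/2)·‖ρ₀^{⊗n} − ρ₁^{⊗n}‖₁ ≤ √(1 − (1 − T)^{2n}). -/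
open Matrix BigOperators
open scoped ComplexOrder

section aux
variable {ι : Type*} [Fintype ι] [DecidableEq ι]
open scoped MatrixOrder

lemma msqrt_eq {A : Matrix ι ι ℂ} (hA : A.PosSemidef) : msqrt A = CFC.sqrt A := by
  rw [msqrt, dif_pos hA, CFC.sqrt_eq_real_sqrt A hA.nonneg, cfcₙ_eq_cfc, hA.1.cfc_eq]
  simp [IsHermitian.cfc, Function.comp_def]

lemma msqrt_posSemidef {A : Matrix ι ι ℂ} (hA : A.PosSemidef) : (msqrt A).PosSemidef := by
  rw [msqrt_eq hA]; exact (CFC.sqrt_nonneg A).posSemidef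

lemma msqrt_mul_self {A : Matrix ι ι ℂ} (hA : A.PosSemidef) : msqrt A * msqrt A = A := by
  rw [msqrt_eq hA]; exact CFC.sqrt_mul_sqrt_self A hA.nonneg

lemma msqrt_unique {A B : Matrix ι ι ℂ} (hB : B.PosSemidef) (h : B * B = A) :
    msqrt A = B := by
  have hA : A.PosSemidef := by
    have : A = Bᴴ * B := by rw [hB.isHermitian.eq, h]
    rw [this]
    exact Matrix.posSemidef_conjTranspose_mul_self B
  rw [msqrt_eq hA]
  exact CFC.sqrt_unique h hB.nonneg

lemma psd_diag_re_nonneg {M : Matrix ι ι ℂ} (hM : M.PosSemidef) (i : ι) :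
    0 ≤ (M i i).re := by
  have := hM.diag_nonneg (i := i)
  rw [Complex.le_def] at this
  exact this.1

end aux
section spectral
variable {ι : Type*} [Fintype ι] [DecidableEq ι]

lemma conj_mul_conj (U : Matrix ι ι ℂ) (hU : star U * U = 1) (f g : ι → ℂ) :
    (U * Matrix.diagonal f * star U) * (U * Matrix.diagonal g * star U)
      = U * Matrix.diagonal (f * g) * star U := by
  have h1 : star U * (U * (Matrix.diagonal g * star U)) = Matrix.diagonal g * star U := by
    rw [← Matrix.mul_assoc, hU, Matrix.one_mul]
  calc U * Matrix.diagonal f * star U * (U * Matrix.diagonal g * star U)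
      = U * (Matrix.diagonal f * (star U * (U * (Matrix.diagonal g * star U)))) := by
        simp only [Matrix.mul_assoc]
    _ = U * (Matrix.diagonal f * Matrix.diagonal g) * star U := by
        rw [h1]; simp only [Matrix.mul_assoc]
    _ = U * Matrix.diagonal (f * g) * star U := by
        rw [Matrix.diagonal_mul_diagonal]; rfl

lemma conj_trace (U : Matrix ι ι ℂ) (hU : star U * U = 1) (f : ι → ℂ) :
    (U * Matrix.diagonal f * star U).trace = ∑ i, f i := by
  rw [Matrix.trace_mul_cycle, hU, Matrix.one_mul, Matrix.trace_diagonal]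

lemma conj_conjTranspose (U : Matrix ι ι ℂ) (f : ι → ℂ) (hf : ∀ i, star (f i) = f i) :
    (U * Matrix.diagonal f * star U)ᴴ = U * Matrix.diagonal f * star U := by
  have hD : (Matrix.diagonal f)ᴴ = Matrix.diagonal f := by
    rw [Matrix.diagonal_conjTranspose, show star f = f from funext hf]
  rw [Matrix.star_eq_conjTranspose, Matrix.conjTranspose_mul, Matrix.conjTranspose_mul, hD,
    Matrix.conjTranspose_conjTranspose, Matrix.mul_assoc]

lemma conj_psd (U : Matrix ι ι ℂ) (r : ι → ℝ) (hr : ∀ i, 0 ≤ r i) :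
    (U * Matrix.diagonal (fun i => (r i : ℂ)) * star U).PosSemidef := by
  have hD : (Matrix.diagonal (fun i => (r i : ℂ))).PosSemidef :=
    Matrix.posSemidef_diagonal_iff.mpr fun i => by
      simpa using Complex.zero_le_real.mpr (hr i)
  simpa [Matrix.star_eq_conjTranspose] using hD.mul_mul_conjTranspose_same U

end spectral
section sign
variable {ι : Type*} [Fintype ι] [DecidableEq ι] {X : Matrix ι ι ℂ}

noncomputable def sgnF (hX : X.IsHermitian) : ι → ℂ :=
  fun i => if 0 ≤ hX.eigenvalues i then 1 else -1

noncomputable def signMat (hX : X.IsHermitian) : Matrix ι ι ℂ :=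
  (hX.eigenvectorUnitary : Matrix ι ι ℂ) * Matrix.diagonal (sgnF hX) *
    star (hX.eigenvectorUnitary : Matrix ι ι ℂ)

noncomputable def absMat (hX : X.IsHermitian) : Matrix ι ι ℂ :=
  (hX.eigenvectorUnitary : Matrix ι ι ℂ) *
    Matrix.diagonal (fun i => ((|hX.eigenvalues i| : ℝ) : ℂ)) *
    star (hX.eigenvectorUnitary : Matrix ι ι ℂ)

variable (hX : X.IsHermitian)

lemma star_mul_self_eigen : star (hX.eigenvectorUnitary : Matrix ι ι ℂ) *
    (hX.eigenvectorUnitary : Matrix ι ι ℂ) = 1 :=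
  Matrix.mem_unitaryGroup_iff'.mp (hX.eigenvectorUnitary).2

lemma mul_star_self_eigen : (hX.eigenvectorUnitary : Matrix ι ι ℂ) *
    star (hX.eigenvectorUnitary : Matrix ι ι ℂ) = 1 :=
  Matrix.mem_unitaryGroup_iff.mp (hX.eigenvectorUnitary).2

lemma spectral' : X = (hX.eigenvectorUnitary : Matrix ι ι ℂ) *
    Matrix.diagonal (fun i => ((hX.eigenvalues i : ℝ) : ℂ)) *
    star (hX.eigenvectorUnitary : Matrix ι ι ℂ) :=
  hX.spectral_theorem

lemma signMat_mul_signMat : signMat hX * signMat hX = 1 := by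
  rw [signMat, conj_mul_conj _ (star_mul_self_eigen hX)]
  have : sgnF hX * sgnF hX = fun _ => 1 := by
    funext i
    simp only [Pi.mul_apply, sgnF]
    split <;> norm_num
  rw [this, show (Matrix.diagonal (fun _ : ι => (1 : ℂ))) = 1 from Matrix.diagonal_one,
    Matrix.mul_one, mul_star_self_eigen hX]

lemma signMat_herm : (signMat hX)ᴴ = signMat hX := by
  apply conj_conjTranspose
  intro i
  simp only [sgnF]
  split <;> simp

lemma mul_signMat : X * signMat hX = absMat hX := by
  calc X * signMat hX
      = ((hX.eigenvectorUnitary : Matrix ι ι ℂ) *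
          Matrix.diagonal (fun i => ((hX.eigenvalues i : ℝ) : ℂ)) *
          star (hX.eigenvectorUnitary : Matrix ι ι ℂ)) * signMat hX := by
        rw [← spectral' hX]
    _ = absMat hX := by
        rw [signMat, conj_mul_conj _ (star_mul_self_eigen hX), absMat]
        have hfun : (fun i => ((hX.eigenvalues i : ℝ) : ℂ)) * sgnF hX
            = fun i => ((|hX.eigenvalues i| : ℝ) : ℂ) := by
          funext i
          simp only [Pi.mul_apply, sgnF]
          split_ifs with h
          · rw [mul_one, abs_of_nonneg h]
          · push_neg at h
            rw [abs_of_neg h]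
            push_cast
            ring
        rw [hfun]

lemma signMat_mul : signMat hX * X = absMat hX := by
  calc signMat hX * X
      = signMat hX * ((hX.eigenvectorUnitary : Matrix ι ι ℂ) *
          Matrix.diagonal (fun i => ((hX.eigenvalues i : ℝ) : ℂ)) *
          star (hX.eigenvectorUnitary : Matrix ι ι ℂ)) := by
        rw [← spectral' hX]
    _ = absMat hX := by
        rw [signMat, conj_mul_conj _ (star_mul_self_eigen hX), absMat]
        have hfun : sgnF hX * (fun i => ((hX.eigenvalues i : ℝ) : ℂ))
            = fun i => ((|hX.eigenvalues i| : ℝ) : ℂ) := by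
          funext i
          simp only [Pi.mul_apply, sgnF]
          split_ifs with h
          · rw [one_mul, abs_of_nonneg h]
          · push_neg at h
            rw [abs_of_neg h]
            push_cast
            ring
        rw [hfun]

lemma absMat_posSemidef : (absMat hX).PosSemidef :=
  conj_psd _ _ (fun i => abs_nonneg _)

lemma absMat_sq : absMat hX * absMat hX = Xᴴ * X := by
  rw [hX.eq, absMat, conj_mul_conj _ (star_mul_self_eigen hX)]
  calc (hX.eigenvectorUnitary : Matrix ι ι ℂ) *
        Matrix.diagonal ((fun i => ((|hX.eigenvalues i| : ℝ) : ℂ)) *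
          (fun i => ((|hX.eigenvalues i| : ℝ) : ℂ))) *
        star (hX.eigenvectorUnitary : Matrix ι ι ℂ)
      = (hX.eigenvectorUnitary : Matrix ι ι ℂ) *
          Matrix.diagonal ((fun i => ((hX.eigenvalues i : ℝ) : ℂ)) *
            (fun i => ((hX.eigenvalues i : ℝ) : ℂ))) *
          star (hX.eigenvectorUnitary : Matrix ι ι ℂ) := by
        have hfun : (fun i => ((|hX.eigenvalues i| : ℝ) : ℂ)) *
              (fun i => ((|hX.eigenvalues i| : ℝ) : ℂ))
            = (fun i => ((hX.eigenvalues i : ℝ) : ℂ)) *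
              (fun i => ((hX.eigenvalues i : ℝ) : ℂ)) := by
          funext i
          simp only [Pi.mul_apply]
          rw [← Complex.ofReal_mul, ← Complex.ofReal_mul,
            abs_mul_abs_self]
        rw [hfun]
    _ = X * X := by
        rw [← conj_mul_conj _ (star_mul_self_eigen hX), ← spectral' hX]

lemma traceNorm_herm : traceNorm X = ∑ i, |hX.eigenvalues i| := by
  rw [traceNorm, msqrt_unique (absMat_posSemidef hX) (absMat_sq hX), absMat,
    conj_trace _ (star_mul_self_eigen hX)]
  rw [← Complex.ofReal_sum, Complex.ofReal_re]

lemma trace_mul_signMat : (X * signMat hX).trace.re = ∑ i, |hX.eigenvalues i| := by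
  rw [mul_signMat hX, absMat, conj_trace _ (star_mul_self_eigen hX)]
  rw [← Complex.ofReal_sum, Complex.ofReal_re]

end sign
section contraction
variable {ι : Type*} [Fintype ι] [DecidableEq ι] {X : Matrix ι ι ℂ}

lemma trace_diag_mul (f : ι → ℂ) (M : Matrix ι ι ℂ) :
    (Matrix.diagonal f * M).trace = ∑ i, f i * M i i := by
  simp [Matrix.trace, Matrix.diag, Matrix.diagonal_mul]

lemma one_sub_signMat_psd (hX : X.IsHermitian) : (1 - signMat hX).PosSemidef := by
  have h1 : (1 : Matrix ι ι ℂ) = (hX.eigenvectorUnitary : Matrix ι ι ℂ) *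
      Matrix.diagonal (fun _ : ι => (1 : ℂ)) * star (hX.eigenvectorUnitary : Matrix ι ι ℂ) := by
    rw [Matrix.diagonal_one, Matrix.mul_one, mul_star_self_eigen hX]
  have h2 : 1 - signMat hX = (hX.eigenvectorUnitary : Matrix ι ι ℂ) *
      Matrix.diagonal (fun i => (((if 0 ≤ hX.eigenvalues i then 0 else 2 : ℝ)) : ℂ)) *
      star (hX.eigenvectorUnitary : Matrix ι ι ℂ) := by
    rw [h1, signMat, ← Matrix.sub_mul, ← Matrix.mul_sub, Matrix.diagonal_sub]
    have hfun : (fun i => (1:ℂ) - sgnF hX i)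
        = fun i => (((if 0 ≤ hX.eigenvalues i then 0 else 2 : ℝ)) : ℂ) := by
      funext i
      simp only [sgnF]
      split_ifs <;> norm_num
    rw [hfun]
  rw [h2]
  exact conj_psd _ _ (fun i => by split_ifs <;> norm_num)

lemma one_add_signMat_psd (hX : X.IsHermitian) : (1 + signMat hX).PosSemidef := by
  have h1 : (1 : Matrix ι ι ℂ) = (hX.eigenvectorUnitary : Matrix ι ι ℂ) *
      Matrix.diagonal (fun _ : ι => (1 : ℂ)) * star (hX.eigenvectorUnitary : Matrix ι ι ℂ) := by
    rw [Matrix.diagonal_one, Matrix.mul_one, mul_star_self_eigen hX]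
  have h2 : 1 + signMat hX = (hX.eigenvectorUnitary : Matrix ι ι ℂ) *
      Matrix.diagonal (fun i => (((if 0 ≤ hX.eigenvalues i then 2 else 0 : ℝ)) : ℂ)) *
      star (hX.eigenvectorUnitary : Matrix ι ι ℂ) := by
    rw [h1, signMat, ← Matrix.add_mul, ← Matrix.mul_add, Matrix.diagonal_add]
    have hfun : (fun i => (1:ℂ) + sgnF hX i)
        = fun i => (((if 0 ≤ hX.eigenvalues i then 2 else 0 : ℝ)) : ℂ) := by
      funext i
      simp only [sgnF]
      split_ifs <;> norm_num
    rw [hfun]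
  rw [h2]
  exact conj_psd _ _ (fun i => by split_ifs <;> norm_num)

lemma trace_mul_le_traceNorm (hX : X.IsHermitian) {S : Matrix ι ι ℂ}
    (h1 : (1 - S).PosSemidef) (h2 : (1 + S).PosSemidef) :
    (X * S).trace.re ≤ traceNorm X := by
  set U : Matrix ι ι ℂ := (hX.eigenvectorUnitary : Matrix ι ι ℂ) with hU
  set M : Matrix ι ι ℂ := star U * S * U with hM
  have hUs : star U * U = 1 := star_mul_self_eigen hX
  have key : (X * S).trace = ∑ i, ((hX.eigenvalues i : ℝ) : ℂ) * M i i := by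
    calc (X * S).trace
        = (U * Matrix.diagonal (fun i => ((hX.eigenvalues i : ℝ) : ℂ)) * star U * S).trace := by
          rw [← spectral' hX]
      _ = (Matrix.diagonal (fun i => ((hX.eigenvalues i : ℝ) : ℂ)) * M).trace := by
          rw [hM]
          rw [Matrix.trace_mul_cycle (U * Matrix.diagonal _) (star U) S]
          rw [Matrix.trace_mul_cycle S (U * Matrix.diagonal _) (star U)]
          rw [show star U * S * (U * Matrix.diagonal (fun i => ((hX.eigenvalues i : ℝ) : ℂ)))
              = (star U * S * U) * Matrix.diagonal (fun i => ((hX.eigenvalues i : ℝ) : ℂ)) from by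
            simp only [Matrix.mul_assoc]]
          rw [Matrix.trace_mul_comm]
      _ = ∑ i, ((hX.eigenvalues i : ℝ) : ℂ) * M i i := trace_diag_mul _ _
  have hbound : ∀ i, |(M i i).re| ≤ 1 := by
    intro i
    have hdiag : (star U * U) i i = 1 := by rw [hUs, Matrix.one_apply_eq]
    have hs1 : (star U * (1 - S) * U).PosSemidef := by
      have := h1.conjTranspose_mul_mul_same U
      rwa [← Matrix.star_eq_conjTranspose] at this
    have hs2 : (star U * (1 + S) * U).PosSemidef := by
      have := h2.conjTranspose_mul_mul_same U
      rwa [← Matrix.star_eq_conjTranspose] at this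
    have e1 : star U * (1 - S) * U = star U * U - M := by
      rw [Matrix.mul_sub, Matrix.mul_one, Matrix.sub_mul, hM]
    have e2 : star U * (1 + S) * U = star U * U + M := by
      rw [Matrix.mul_add, Matrix.mul_one, Matrix.add_mul, hM]
    have p1 := psd_diag_re_nonneg hs1 i
    have p2 := psd_diag_re_nonneg hs2 i
    rw [e1] at p1; rw [e2] at p2
    simp only [Matrix.sub_apply, Matrix.add_apply, Complex.sub_re, Complex.add_re, hdiag] at p1 p2
    simp only [Complex.one_re] at p1 p2
    rw [abs_le]
    constructor <;> linarith
  have hre : (X * S).trace.re = ∑ i, hX.eigenvalues i * (M i i).re := by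
    rw [key, Complex.re_sum]
    congr 1
    funext i
    rw [Complex.re_ofReal_mul]
  rw [hre, traceNorm_herm hX]
  apply Finset.sum_le_sum
  intro i _
  calc hX.eigenvalues i * (M i i).re
      ≤ |hX.eigenvalues i * (M i i).re| := le_abs_self _
    _ = |hX.eigenvalues i| * |(M i i).re| := abs_mul _ _
    _ ≤ |hX.eigenvalues i| * 1 := by
        exact mul_le_mul_of_nonneg_left (hbound i) (abs_nonneg _)
    _ = |hX.eigenvalues i| := mul_one _

end contraction
section cs
variable {ι : Type*} [Fintype ι] [DecidableEq ι]

lemma frob_trace (M : Matrix ι ι ℂ) :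
    (Mᴴ * M).trace.re = ∑ i, ∑ j, ‖M i j‖ ^ 2 := by
  rw [Matrix.trace, Complex.re_sum]
  rw [Finset.sum_comm]
  congr 1
  funext i
  simp only [Matrix.diag, Matrix.mul_apply, Matrix.conjTranspose_apply, Complex.re_sum]
  congr 1
  funext j
  rw [RCLike.star_def, mul_comm, Complex.mul_conj]
  simp [Complex.sq_norm]

lemma cs_trace (M N : Matrix ι ι ℂ) :
    (M * N).trace.re ≤ Real.sqrt ((Mᴴ * M).trace.re) * Real.sqrt ((Nᴴ * N).trace.re) := by
  have habs : (M * N).trace.re ≤ ∑ i, ∑ j, ‖M i j‖ * ‖N j i‖ := by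
    calc (M * N).trace.re
        ≤ ‖(M * N).trace‖ := Complex.re_le_norm _
      _ ≤ ∑ i, ‖(M * N) i i‖ := norm_sum_le _ _
      _ ≤ ∑ i, ∑ j, ‖M i j‖ * ‖N j i‖ := by
          apply Finset.sum_le_sum
          intro i _
          rw [Matrix.mul_apply]
          calc ‖∑ j, M i j * N j i‖
              ≤ ∑ j, ‖M i j * N j i‖ := norm_sum_le _ _
            _ = ∑ j, ‖M i j‖ * ‖N j i‖ := by
                congr 1; funext j; exact norm_mul _ _
  have hcs := Real.sum_mul_le_sqrt_mul_sqrt (Finset.univ ×ˢ Finset.univ)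
    (fun p : ι × ι => ‖M p.1 p.2‖) (fun p : ι × ι => ‖N p.2 p.1‖)
  rw [Finset.sum_product] at hcs
  have e1 : ∑ p ∈ Finset.univ ×ˢ Finset.univ, ‖M p.1 p.2‖ ^ 2
      = (Mᴴ * M).trace.re := by
    rw [Finset.sum_product, frob_trace]
  have e2 : ∑ p ∈ Finset.univ ×ˢ Finset.univ, ‖N p.2 p.1‖ ^ 2
      = (Nᴴ * N).trace.re := by
    rw [Finset.sum_product, frob_trace, Finset.sum_comm]
  rw [e1, e2] at hcs
  exact le_trans habs hcs

end cs
section pair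
variable {ι : Type*} [Fintype ι] [DecidableEq ι]

lemma psd_trace_re_nonneg {M : Matrix ι ι ℂ} (hM : M.PosSemidef) : 0 ≤ M.trace.re := by
  rw [Matrix.trace, Complex.re_sum]
  exact Finset.sum_nonneg fun i _ => psd_diag_re_nonneg hM i

lemma trace_mul_psd_nonneg {A B : Matrix ι ι ℂ} (hA : A.PosSemidef) (hB : B.PosSemidef) :
    0 ≤ (A * B).trace.re := by
  have h1 : A * B = msqrt A * msqrt A * B := by rw [msqrt_mul_self hA]
  rw [h1, Matrix.mul_assoc, Matrix.trace_mul_comm (msqrt A) (msqrt A * B)]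
  have h2 : (msqrt A * B * msqrt A).PosSemidef := by
    have := hB.mul_mul_conjTranspose_same (msqrt A)
    rwa [(msqrt_posSemidef hA).isHermitian.eq] at this
  exact psd_trace_re_nonneg h2

lemma trace_mul_conj_diag (U : Matrix ι ι ℂ) (f : ι → ℂ) (M : Matrix ι ι ℂ) :
    ((U * Matrix.diagonal f * star U) * M).trace = ∑ i, f i * (star U * M * U) i i := by
  rw [Matrix.trace_mul_cycle (U * Matrix.diagonal f) (star U) M]
  rw [Matrix.trace_mul_cycle M (U * Matrix.diagonal f) (star U)]
  rw [show star U * M * (U * Matrix.diagonal f) = (star U * M * U) * Matrix.diagonal f from by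
    simp only [Matrix.mul_assoc]]
  rw [Matrix.trace_mul_comm, trace_diag_mul]

lemma pair_bounds {ρ σ : Matrix ι ι ℂ} (hρ : ρ.PosSemidef) (hρt : ρ.trace = 1)
    (hσ : σ.PosSemidef) (hσt : σ.trace = 1) :
    (1 / 2) * traceNorm (ρ - σ) ≤ Real.sqrt (1 - ((msqrt ρ * msqrt σ).trace.re) ^ 2) ∧
      1 - (1 / 2) * traceNorm (ρ - σ) ≤ (msqrt ρ * msqrt σ).trace.re := by
  set A := msqrt ρ with hA
  set B := msqrt σ with hB
  set g : ℝ := (A * B).trace.re with hg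
  have hAp : A.PosSemidef := msqrt_posSemidef hρ
  have hBp : B.PosSemidef := msqrt_posSemidef hσ
  have hA2 : A * A = ρ := msqrt_mul_self hρ
  have hB2 : B * B = σ := msqrt_mul_self hσ
  set Δ : Matrix ι ι ℂ := A - B with hΔ
  set C : Matrix ι ι ℂ := A + B with hC
  have hΔh : Δ.IsHermitian := hAp.isHermitian.sub hBp.isHermitian
  have hCh : C.IsHermitian := hAp.isHermitian.add hBp.isHermitian
  set X : Matrix ι ι ℂ := ρ - σ with hX
  have hXh : X.IsHermitian := hρ.isHermitian.sub hσ.isHermitian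
  have htrAB : (B * A).trace = (A * B).trace := Matrix.trace_mul_comm B A
  have hdec : Δ * C + C * Δ = X + X := by
    rw [hΔ, hC, hX, ← hA2, ← hB2]; noncomm_ring
  have htΔ : (Δ * Δ).trace.re = 2 - 2 * g := by
    calc (Δ * Δ).trace.re
        = ((A*A).trace + (B*B).trace - ((A*B).trace + (B*A).trace)).re := by
          rw [show Δ * Δ = A*A + B*B - (A*B + B*A) from by rw [hΔ]; noncomm_ring,
            Matrix.trace_sub, Matrix.trace_add, Matrix.trace_add]
      _ = 2 - 2 * g := by
          rw [hA2, hB2, hρt, hσt, htrAB]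
          simp only [Complex.sub_re, Complex.add_re, Complex.one_re]
          rw [hg]; ring
  have htC : (C * C).trace.re = 2 + 2 * g := by
    calc (C * C).trace.re
        = ((A*A).trace + (B*B).trace + ((A*B).trace + (B*A).trace)).re := by
          rw [show C * C = A*A + B*B + (A*B + B*A) from by rw [hC]; noncomm_ring,
            Matrix.trace_add, Matrix.trace_add, Matrix.trace_add]
      _ = 2 + 2 * g := by
          rw [hA2, hB2, hρt, hσt, htrAB]
          simp only [Complex.add_re, Complex.one_re]
          rw [hg]; ring
  have hfrobΔ : 0 ≤ 2 - 2 * g := by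
    have h0 : 0 ≤ (Δᴴ * Δ).trace.re := by rw [frob_trace]; positivity
    rw [hΔh.eq] at h0
    linarith
  have hg0 : 0 ≤ g := trace_mul_psd_nonneg hAp hBp
  -- Cauchy-Schwarz part
  set S : Matrix ι ι ℂ := signMat hXh with hS
  have hSh : Sᴴ = S := signMat_herm hXh
  have hS2 : S * S = 1 := signMat_mul_signMat hXh
  have htn : traceNorm X = (X * S).trace.re := by
    rw [trace_mul_signMat hXh, traceNorm_herm hXh]
  have e1 : ((C*S)ᴴ * (C*S)).trace = (Cᴴ*C).trace := by
    rw [Matrix.conjTranspose_mul, hSh, hCh.eq]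
    rw [Matrix.trace_mul_comm (S*C) (C*S)]
    rw [show (C*S)*(S*C) = C*(S*S)*C from by simp only [Matrix.mul_assoc], hS2, Matrix.mul_one]
  have e2 : ((S*C)ᴴ * (S*C)).trace = (Cᴴ*C).trace := by
    rw [Matrix.conjTranspose_mul, hSh, hCh.eq]
    rw [show (C*S)*(S*C) = C*(S*S)*C from by simp only [Matrix.mul_assoc], hS2, Matrix.mul_one]
  have hXS : 2 * (X*S).trace.re = (Δ*(C*S)).trace.re + (Δ*(S*C)).trace.re := by
    have h' : ((X+X)*S).trace = (Δ*(C*S)).trace + (Δ*(S*C)).trace := by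
      rw [← hdec, Matrix.add_mul, Matrix.trace_add]
      congr 1
      · simp only [Matrix.mul_assoc]
      · rw [Matrix.trace_mul_comm (C*Δ) S, ← Matrix.mul_assoc, Matrix.trace_mul_comm (S*C) Δ]
    have h'' : ((X+X)*S).trace = (X*S).trace + (X*S).trace := by
      rw [Matrix.add_mul, Matrix.trace_add]
    rw [h''] at h'
    have := congrArg Complex.re h'
    simp only [Complex.add_re] at this
    linarith
  have hcs1 : (Δ*(C*S)).trace.re ≤ Real.sqrt (2 - 2*g) * Real.sqrt (2 + 2*g) := by
    have h := cs_trace Δ (C*S)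
    rw [hΔh.eq, congrArg Complex.re e1, hCh.eq, htΔ, htC] at h
    exact h
  have hcs2 : (Δ*(S*C)).trace.re ≤ Real.sqrt (2 - 2*g) * Real.sqrt (2 + 2*g) := by
    have h := cs_trace Δ (S*C)
    rw [hΔh.eq, congrArg Complex.re e2, hCh.eq, htΔ, htC] at h
    exact h
  have hsq : Real.sqrt (2 - 2*g) * Real.sqrt (2 + 2*g) = 2 * Real.sqrt (1 - g^2) := by
    rw [← Real.sqrt_mul hfrobΔ]
    rw [show (2 - 2*g) * (2 + 2*g) = 4 * (1 - g^2) from by ring]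
    rw [Real.sqrt_mul (by norm_num : (0:ℝ) ≤ 4)]
    rw [show (4:ℝ) = 2^2 from by norm_num, Real.sqrt_sq (by norm_num : (0:ℝ) ≤ 2)]
  have hconc1 : (1/2) * traceNorm X ≤ Real.sqrt (1 - g^2) := by
    rw [htn]
    nlinarith [hcs1, hcs2, hXS, hsq]
  -- Powers-Stormer part
  set V : Matrix ι ι ℂ := (hΔh.eigenvectorUnitary : Matrix ι ι ℂ) with hV
  have hdd : star V * Δ * V = Matrix.diagonal (fun i => ((hΔh.eigenvalues i : ℝ) : ℂ)) :=
    calc star V * Δ * V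
        = star V * (V * Matrix.diagonal (fun i => ((hΔh.eigenvalues i : ℝ) : ℂ)) * star V) * V := by
          rw [← spectral' hΔh]
      _ = (star V * V) * Matrix.diagonal (fun i => ((hΔh.eigenvalues i : ℝ) : ℂ)) * (star V * V) := by
          simp only [Matrix.mul_assoc]
      _ = _ := by rw [star_mul_self_eigen hΔh, Matrix.one_mul, Matrix.mul_one]
  have h_trΔΔ : (Δ * Δ).trace.re = ∑ i, (hΔh.eigenvalues i)^2 := by
    have hcalc : (Δ * Δ).trace = ∑ i, ((hΔh.eigenvalues i : ℝ) : ℂ) * (star V * Δ * V) i i := by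
      calc (Δ * Δ).trace
          = ((V * Matrix.diagonal (fun i => ((hΔh.eigenvalues i : ℝ) : ℂ)) * star V) * Δ).trace := by
            rw [← spectral' hΔh]
        _ = _ := trace_mul_conj_diag _ _ _
    rw [hcalc, hdd, Complex.re_sum]
    congr 1
    funext i
    rw [Matrix.diagonal_apply_eq, ← Complex.ofReal_mul, Complex.ofReal_re, sq]
  have h_trCabs : (C * absMat hΔh).trace
      = ∑ i, ((|hΔh.eigenvalues i| : ℝ) : ℂ) * (star V * C * V) i i := by
    rw [Matrix.trace_mul_comm, absMat]
    exact trace_mul_conj_diag _ _ _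
  have hptwise : ∀ i, (hΔh.eigenvalues i)^2 ≤ |hΔh.eigenvalues i| * ((star V * C * V) i i).re := by
    intro i
    have hpa : (star V * A * V).PosSemidef := by
      have := hAp.conjTranspose_mul_mul_same V
      rwa [← Matrix.star_eq_conjTranspose] at this
    have hpb : (star V * B * V).PosSemidef := by
      have := hBp.conjTranspose_mul_mul_same V
      rwa [← Matrix.star_eq_conjTranspose] at this
    have ha := psd_diag_re_nonneg hpa i
    have hb := psd_diag_re_nonneg hpb i
    have hCsplit : star V * C * V = star V * A * V + star V * B * V := by
      rw [hC, Matrix.mul_add, Matrix.add_mul]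
    have hΔsplit : star V * Δ * V = star V * A * V - star V * B * V := by
      rw [hΔ, Matrix.mul_sub, Matrix.sub_mul]
    have hlam : hΔh.eigenvalues i = ((star V * A * V) i i).re - ((star V * B * V) i i).re := by
      have h1 : ((star V * Δ * V) i i).re
          = ((Matrix.diagonal (fun i => ((hΔh.eigenvalues i : ℝ) : ℂ))) i i).re := by rw [hdd]
      rw [hΔsplit] at h1
      simp only [Matrix.sub_apply, Complex.sub_re, Matrix.diagonal_apply_eq,
        Complex.ofReal_re] at h1
      linarith
    have hNre : ((star V * C * V) i i).re
        = ((star V * A * V) i i).re + ((star V * B * V) i i).re := by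
      rw [hCsplit]; simp [Matrix.add_apply]
    have habs : |hΔh.eigenvalues i| ≤ ((star V * C * V) i i).re := by
      rw [hlam, hNre]
      exact abs_le.mpr ⟨by linarith, by linarith⟩
    calc (hΔh.eigenvalues i)^2 = |hΔh.eigenvalues i| * |hΔh.eigenvalues i| := by
          rw [sq, ← abs_mul_abs_self]
      _ ≤ |hΔh.eigenvalues i| * ((star V * C * V) i i).re :=
          mul_le_mul_of_nonneg_left habs (abs_nonneg _)
  have hPS1 : (Δ * Δ).trace.re ≤ (C * absMat hΔh).trace.re := by
    rw [h_trΔΔ, h_trCabs, Complex.re_sum]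
    apply Finset.sum_le_sum
    intro i _
    rw [Complex.re_ofReal_mul]
    exact hptwise i
  have hPS2 : (C * absMat hΔh).trace.re = (X * signMat hΔh).trace.re := by
    have hΔS' : Δ * signMat hΔh = absMat hΔh := mul_signMat hΔh
    have hS'Δ : signMat hΔh * Δ = absMat hΔh := signMat_mul hΔh
    have h' : ((X+X) * signMat hΔh).trace = (C * absMat hΔh).trace + (C * absMat hΔh).trace := by
      rw [← hdec, Matrix.add_mul, Matrix.trace_add]
      congr 1
      · rw [Matrix.trace_mul_comm (Δ*C) (signMat hΔh), ← Matrix.mul_assoc, hS'Δ,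
          Matrix.trace_mul_comm]
      · rw [show C * Δ * signMat hΔh = C * (Δ * signMat hΔh) from by
          simp only [Matrix.mul_assoc], hΔS']
    have h'' : ((X+X) * signMat hΔh).trace = (X * signMat hΔh).trace + (X * signMat hΔh).trace := by
      rw [Matrix.add_mul, Matrix.trace_add]
    rw [h''] at h'
    have := congrArg Complex.re h'
    simp only [Complex.add_re] at this
    linarith
  have hPS3 : (X * signMat hΔh).trace.re ≤ traceNorm X :=
    trace_mul_le_traceNorm hXh (one_sub_signMat_psd hΔh) (one_add_signMat_psd hΔh)
  have hconc2 : 1 - (1/2) * traceNorm X ≤ g := by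
    have : 2 - 2*g ≤ traceNorm X := by
      rw [← htΔ]; linarith [hPS1, hPS2, hPS3]
    linarith
  exact ⟨hconc1, hconc2⟩

end pair
section tensor
variable {d : ℕ} {n : ℕ}

lemma tensorPow_mul (A B : Matrix (Fin d) (Fin d) ℂ) :
    tensorPow A n * tensorPow B n = tensorPow (A * B) n := by
  ext i j
  simp only [tensorPow, Matrix.mul_apply, Matrix.of_apply]
  calc ∑ f : Fin n → Fin d, (∏ k, A (i k) (f k)) * ∏ k, B (f k) (j k)
      = ∑ f : Fin n → Fin d, ∏ k, A (i k) (f k) * B (f k) (j k) := by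
        apply Finset.sum_congr rfl
        intro f _
        rw [← Finset.prod_mul_distrib]
    _ = ∏ k, ∑ m, A (i k) m * B m (j k) := by
        rw [← Fintype.piFinset_univ,
          Finset.sum_prod_piFinset Finset.univ (fun k m => A (i k) m * B m (j k))]

lemma tensorPow_conjTranspose (A : Matrix (Fin d) (Fin d) ℂ) :
    (tensorPow A n)ᴴ = tensorPow Aᴴ n := by
  ext i j
  simp only [tensorPow, Matrix.conjTranspose_apply, Matrix.of_apply, star_prod]

lemma tensorPow_trace (A : Matrix (Fin d) (Fin d) ℂ) :
    (tensorPow A n).trace = A.trace ^ n := by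
  simp only [Matrix.trace, Matrix.diag, tensorPow, Matrix.of_apply]
  rw [← Fintype.piFinset_univ,
    Finset.sum_prod_piFinset Finset.univ (fun (_ : Fin n) (m : Fin d) => A m m)]
  rw [Finset.prod_const, Finset.card_univ, Fintype.card_fin]

lemma tensorPow_psd {A : Matrix (Fin d) (Fin d) ℂ} (hA : A.PosSemidef) :
    (tensorPow A n).PosSemidef := by
  have h : tensorPow A n = (tensorPow (msqrt A) n)ᴴ * tensorPow (msqrt A) n := by
    rw [tensorPow_conjTranspose, (msqrt_posSemidef hA).isHermitian.eq, tensorPow_mul,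
      msqrt_mul_self hA]
  rw [h]
  exact Matrix.posSemidef_conjTranspose_mul_self _

lemma msqrt_tensorPow {A : Matrix (Fin d) (Fin d) ℂ} (hA : A.PosSemidef) :
    msqrt (tensorPow A n) = tensorPow (msqrt A) n :=
  msqrt_unique (tensorPow_psd (msqrt_posSemidef hA))
    (by rw [tensorPow_mul, msqrt_mul_self hA])

end tensor

lemma trace_mul_real {ι : Type*} [Fintype ι] [DecidableEq ι] {A B : Matrix ι ι ℂ}
    (hA : A.IsHermitian) (hB : B.IsHermitian) :
    (A * B).trace = (((A * B).trace.re : ℝ) : ℂ) := by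
  have hst : star ((A * B).trace) = (A * B).trace := by
    rw [← Matrix.trace_conjTranspose, Matrix.conjTranspose_mul, hA.eq, hB.eq,
      Matrix.trace_mul_comm]
  exact (Complex.conj_eq_iff_re.mp hst).symm

/-- Multi-copy distinguishability, upper bound (unconditional form). -/
theorem multi_copy_distinguishability_upper {d : ℕ} (ρ₀ ρ₁ : Matrix (Fin d) (Fin d) ℂ)
    (hρ₀ : ρ₀.PosSemidef) (hρ₀t : ρ₀.trace = 1)
    (hρ₁ : ρ₁.PosSemidef) (hρ₁t : ρ₁.trace = 1)
    (n : ℕ) (hn : 1 ≤ n) :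
    (1 / 2) * traceNorm (tensorPow ρ₀ n - tensorPow ρ₁ n) ≤
      Real.sqrt (1 - (1 - (1 / 2) * traceNorm (ρ₀ - ρ₁)) ^ (2 * n)) := by
  obtain ⟨h1, h2⟩ := pair_bounds hρ₀ hρ₀t hρ₁ hρ₁t
  set g : ℝ := (msqrt ρ₀ * msqrt ρ₁).trace.re with hgdef
  set T : ℝ := (1 / 2) * traceNorm (ρ₀ - ρ₁) with hT
  have hg0 : 0 ≤ g := trace_mul_psd_nonneg (msqrt_posSemidef hρ₀) (msqrt_posSemidef hρ₁)
  have hT1 : T ≤ 1 := by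
    have hle : 1 - g ^ 2 ≤ 1 := by nlinarith [sq_nonneg g]
    have h1' := Real.sqrt_le_sqrt hle
    rw [Real.sqrt_one] at h1'
    exact le_trans h1 h1'
  have hPt0 : (tensorPow ρ₀ n).trace = 1 := by rw [tensorPow_trace, hρ₀t, one_pow]
  have hPt1 : (tensorPow ρ₁ n).trace = 1 := by rw [tensorPow_trace, hρ₁t, one_pow]
  obtain ⟨H1, _⟩ := pair_bounds (tensorPow_psd hρ₀) hPt0 (tensorPow_psd hρ₁) hPt1
  have hGn : (msqrt (tensorPow ρ₀ n) * msqrt (tensorPow ρ₁ n)).trace.re = g ^ n := by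
    rw [msqrt_tensorPow hρ₀, msqrt_tensorPow hρ₁, tensorPow_mul, tensorPow_trace,
      trace_mul_real (msqrt_posSemidef hρ₀).isHermitian (msqrt_posSemidef hρ₁).isHermitian,
      ← Complex.ofReal_pow, Complex.ofReal_re]
  rw [hGn] at H1
  have hstep : (1 - T) ^ (2 * n) ≤ (g ^ n) ^ 2 := by
    have hsq : (1 - T) ^ 2 ≤ g ^ 2 := sq_le_sq' (by linarith) h2
    calc (1 - T) ^ (2 * n) = ((1 - T) ^ 2) ^ n := by rw [pow_mul]
      _ ≤ (g ^ 2) ^ n := pow_le_pow_left₀ (sq_nonneg _) hsq n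
      _ = (g ^ n) ^ 2 := by ring
  refine le_trans H1 (Real.sqrt_le_sqrt ?_)
  linarith
end
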